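/- Let Λ be a graph and x a vertex of Λ. The right-angled Coxeter group W_{Λ'}, where Λ' is obtained by doubling Λ along the star of x and then deleting x, embeds as an index-2 subgroup of W_Λ (namely the kernel of the map W_Λ → Z/2 sending x ↦ 1 and all other generators ↦ 0). -/

import Mathlib

/-- The set of relators of the right-angled Coxeter group of a graph: squares of the
generators, and squares of products of adjacent generators. -/
def racgRels {V : Type*} (G : SimpleGraph V) : Set (FreeGroup V) :=
  {r | (∃ v, r = FreeGroup.of v * FreeGroup.of v) ∨
       (∃ a b, G.Adj a b ∧ r = (FreeGroup.of a * FreeGroup.of b) ^ 2)}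

/-- The right-angled Coxeter group of a graph. -/
abbrev RACG {V : Type*} (G : SimpleGraph V) := PresentedGroup (racgRels G)

/-- The standard generator of a right-angled Coxeter group corresponding to a vertex. -/
noncomputable def racgGen {V : Type*} (G : SimpleGraph V) (v : V) : RACG G :=
  PresentedGroup.of v
/-- Vertices of the double of `G` along the star of `x`, with `x` deleted: a first copy
containing everything except `x` (this includes the shared star of `x`), and a second
copy of the vertices outside the closed star of `x`. -/
def DoubleVert {V : Type*} (G : SimpleGraph V) (x : V) : Type _ :=
  {v : V // v ≠ x} ⊕ {v : V // ¬(v = x ∨ G.Adj x v)}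

/-- The double of `G` along the star of the vertex `x`, with `x` deleted. -/
def doubleMinusStar {V : Type*} (G : SimpleGraph V) (x : V) :
    SimpleGraph (DoubleVert G x) :=
  SimpleGraph.fromRel (fun a b =>
    match a, b with
    | Sum.inl a, Sum.inl b => G.Adj a.1 b.1
    | Sum.inl a, Sum.inr b => G.Adj a.1 b.1 ∧ G.Adj x a.1
    | Sum.inr a, Sum.inl b => G.Adj a.1 b.1 ∧ G.Adj x b.1
    | Sum.inr a, Sum.inr b => G.Adj a.1 b.1)

section Aux
variable {V : Type*} {Γ : Type*} [Group Γ]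

lemma racg_gen_sq (G : SimpleGraph V) (v : V) :
    racgGen G v * racgGen G v = 1 := by
  have h : FreeGroup.of v * FreeGroup.of v ∈ Subgroup.normalClosure (racgRels G) :=
    Subgroup.subset_normalClosure (Or.inl ⟨v, rfl⟩)
  exact (QuotientGroup.eq_one_iff _).2 h

lemma racg_gen_inv (G : SimpleGraph V) (v : V) :
    (racgGen G v)⁻¹ = racgGen G v :=
  inv_eq_of_mul_eq_one_right (racg_gen_sq G v)

lemma racg_gen_comm {G : SimpleGraph V} {a b : V} (h : G.Adj a b) :
    racgGen G a * racgGen G b = racgGen G b * racgGen G a := by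
  have hsq : (racgGen G a * racgGen G b) ^ 2 = 1 := by
    have h' : (FreeGroup.of a * FreeGroup.of b) ^ 2 ∈ Subgroup.normalClosure (racgRels G) :=
      Subgroup.subset_normalClosure (Or.inr ⟨a, b, h, rfl⟩)
    exact (QuotientGroup.eq_one_iff _).2 h'
  have h1 : racgGen G a * racgGen G b = (racgGen G a * racgGen G b)⁻¹ := by
    rw [eq_inv_iff_mul_eq_one, ← sq]; exact hsq
  rw [h1, mul_inv_rev, racg_gen_inv, racg_gen_inv]

lemma racg_rels_lift (H : SimpleGraph V) (g : V → Γ)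
    (hsq : ∀ v, g v * g v = 1)
    (hcomm : ∀ a b, H.Adj a b → g a * g b = g b * g a) :
    ∀ r ∈ racgRels H, FreeGroup.lift g r = 1 := by
  rintro r (⟨v, rfl⟩ | ⟨a, b, hab, rfl⟩)
  · simp [hsq v]
  · simp only [map_pow, map_mul, FreeGroup.lift_apply_of]
    have : (g a * g b) * (g a * g b) = (g a * g a) * (g b * g b) := by
      rw [mul_assoc, ← mul_assoc (g b), ← hcomm a b hab, mul_assoc, ← mul_assoc]
    rw [sq, this, hsq, hsq, one_mul]

noncomputable def racgHom (H : SimpleGraph V) (g : V → Γ)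
    (hsq : ∀ v, g v * g v = 1)
    (hcomm : ∀ a b, H.Adj a b → g a * g b = g b * g a) : RACG H →* Γ :=
  PresentedGroup.toGroup (racg_rels_lift H g hsq hcomm)

@[simp] lemma racgHom_gen (H : SimpleGraph V) (g : V → Γ) (hsq) (hcomm) (v : V) :
    racgHom H g hsq hcomm (racgGen H v) = g v :=
  PresentedGroup.toGroup.of _

lemma racg_hom_ext {H : SimpleGraph V} {f₁ f₂ : RACG H →* Γ}
    (h : ∀ v, f₁ (racgGen H v) = f₂ (racgGen H v)) : f₁ = f₂ :=
  PresentedGroup.ext h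

end Aux

section Swap
variable {V : Type*} (G : SimpleGraph V) (x : V)

open Classical in
noncomputable def swapVert : DoubleVert G x → DoubleVert G x
  | Sum.inl a => if h : G.Adj x a.1 then Sum.inl a
      else Sum.inr ⟨a.1, by rintro (h' | h'); exacts [a.2 h', h h']⟩
  | Sum.inr a => Sum.inl ⟨a.1, fun h => a.2 (Or.inl h)⟩

lemma swapVert_invol : ∀ a, swapVert G x (swapVert G x a) = a := by
  rintro (a | a)
  · by_cases h : G.Adj x a.1
    · simp [swapVert, h]; exact rfl
    · simp [swapVert, h]; exact rfl
  · have h : ¬ G.Adj x a.1 := fun h => a.2 (Or.inr h)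
    simp [swapVert, h]; exact rfl

lemma swapVert_injective : Function.Injective (swapVert G x) :=
  Function.LeftInverse.injective (swapVert_invol G x)

variable {G x}

lemma doubleMinusStar_adj_iff {a b : DoubleVert G x} :
    (doubleMinusStar G x).Adj a b ↔ a ≠ b ∧
      ((match a, b with
        | Sum.inl a, Sum.inl b => G.Adj a.1 b.1
        | Sum.inl a, Sum.inr b => G.Adj a.1 b.1 ∧ G.Adj x a.1
        | Sum.inr a, Sum.inl b => G.Adj a.1 b.1 ∧ G.Adj x b.1
        | Sum.inr a, Sum.inr b => G.Adj a.1 b.1) ∨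
       (match b, a with
        | Sum.inl a, Sum.inl b => G.Adj a.1 b.1
        | Sum.inl a, Sum.inr b => G.Adj a.1 b.1 ∧ G.Adj x a.1
        | Sum.inr a, Sum.inl b => G.Adj a.1 b.1 ∧ G.Adj x b.1
        | Sum.inr a, Sum.inr b => G.Adj a.1 b.1)) :=
  SimpleGraph.fromRel_adj _ a b

lemma swapVert_adj {a b : DoubleVert G x} (h : (doubleMinusStar G x).Adj a b) :
    (doubleMinusStar G x).Adj (swapVert G x a) (swapVert G x b) := by
  rw [doubleMinusStar_adj_iff] at h ⊢
  obtain ⟨hne, hrel⟩ := h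
  refine ⟨fun he => hne (swapVert_injective G x he), Or.inl ?_⟩
  match a, b with
  | Sum.inl a, Sum.inl b =>
    have hab : G.Adj a.1 b.1 := by rcases hrel with h | h; exact h; exact h.symm
    by_cases ha : G.Adj x a.1 <;> by_cases hb : G.Adj x b.1 <;>
      simp_all [swapVert]
  | Sum.inl a, Sum.inr b =>
    have hab : G.Adj a.1 b.1 ∧ G.Adj x a.1 := by
      rcases hrel with h | h; exact h; exact ⟨h.1.symm, h.2⟩
    simp_all [swapVert]
  | Sum.inr a, Sum.inl b =>
    have hab : G.Adj a.1 b.1 ∧ G.Adj x b.1 := by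
      rcases hrel with h | h; exact h; exact ⟨h.1.symm, h.2⟩
    simp_all [swapVert]
  | Sum.inr a, Sum.inr b =>
    have hab : G.Adj a.1 b.1 := by rcases hrel with h | h; exact h; exact h.symm
    have ha2 : ¬ G.Adj x a.1 := fun h => a.2 (Or.inr h)
    have hb2 : ¬ G.Adj x b.1 := fun h => b.2 (Or.inr h)
    simp_all [swapVert]

lemma adj_inl_inl {a b : {v : V // v ≠ x}} (h : G.Adj a.1 b.1) :
    (doubleMinusStar G x).Adj (Sum.inl a) (Sum.inl b) := by
  refine doubleMinusStar_adj_iff.2 ?_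
  exact ⟨fun he => h.ne (congrArg Subtype.val (Sum.inl.inj he)), Or.inl h⟩

lemma adj_inl_inr {a : {v : V // v ≠ x}} {b : {v : V // ¬(v = x ∨ G.Adj x v)}}
    (h : G.Adj a.1 b.1) (hs : G.Adj x a.1) :
    (doubleMinusStar G x).Adj (Sum.inl a) (Sum.inr b) := by
  refine doubleMinusStar_adj_iff.2 ?_
  exact ⟨Sum.inl_ne_inr, Or.inl ⟨h, hs⟩⟩

lemma adj_inr_inr {a b : {v : V // ¬(v = x ∨ G.Adj x v)}} (h : G.Adj a.1 b.1) :
    (doubleMinusStar G x).Adj (Sum.inr a) (Sum.inr b) := by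
  refine doubleMinusStar_adj_iff.2 ?_
  exact ⟨fun he => h.ne (congrArg Subtype.val (Sum.inr.inj he)), Or.inl h⟩

variable (G x)

lemma swapVert_inl_star {a : {v : V // v ≠ x}} (h : G.Adj x a.1) :
    swapVert G x (Sum.inl a) = Sum.inl a := by simp [swapVert, h]; exact rfl

lemma swapVert_inl_nonstar {a : {v : V // v ≠ x}} (h : ¬ G.Adj x a.1) :
    swapVert G x (Sum.inl a) =
      Sum.inr ⟨a.1, by rintro (h' | h'); exacts [a.2 h', h h']⟩ := by
  simp [swapVert, h]; exact rfl

lemma swapVert_inr (a : {v : V // ¬(v = x ∨ G.Adj x v)}) :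
    swapVert G x (Sum.inr a) = Sum.inl ⟨a.1, fun h => a.2 (Or.inl h)⟩ := rfl

end Swap

section Sigma
variable {V : Type*} (G : SimpleGraph V) (x : V)

noncomputable def sigmaHom : RACG (doubleMinusStar G x) →* RACG (doubleMinusStar G x) :=
  racgHom _ (fun a => racgGen _ (swapVert G x a))
    (fun a => racg_gen_sq _ _)
    (fun a b h => racg_gen_comm (swapVert_adj h))

@[simp] lemma sigmaHom_gen (a : DoubleVert G x) :
    sigmaHom G x (racgGen _ a) = racgGen _ (swapVert G x a) :=
  racgHom_gen _ _ _ _ _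

lemma sigmaHom_sigmaHom (k : RACG (doubleMinusStar G x)) :
    sigmaHom G x (sigmaHom G x k) = k := by
  have h : (sigmaHom G x).comp (sigmaHom G x) = MonoidHom.id _ :=
    racg_hom_ext (fun a => by simp [swapVert_invol])
  exact DFunLike.congr_fun h k

noncomputable def sigmaEquiv : RACG (doubleMinusStar G x) ≃* RACG (doubleMinusStar G x) :=
  { toFun := sigmaHom G x, invFun := sigmaHom G x,
    left_inv := sigmaHom_sigmaHom G x, right_inv := sigmaHom_sigmaHom G x,
    map_mul' := map_mul _ }

lemma sigmaEquiv_sq : sigmaEquiv G x * sigmaEquiv G x = 1 :=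
  MulEquiv.ext (fun k => sigmaHom_sigmaHom G x k)

noncomputable def act : Multiplicative (ZMod 2) →* MulAut (RACG (doubleMinusStar G x)) :=
  MonoidHom.mk' (fun c => if Multiplicative.toAdd c = 0 then 1 else sigmaEquiv G x)
    (by
      have h2 : ∀ z : ZMod 2, z = 0 ∨ z = 1 := by decide
      intro a b
      rcases h2 (Multiplicative.toAdd a) with ha | ha <;>
        rcases h2 (Multiplicative.toAdd b) with hb | hb <;>
        · simp only [toAdd_mul, ha, hb]
          simp [sigmaEquiv_sq G x, show (1+1:ZMod 2)=0 from by decide,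
            show (0+0:ZMod 2)=0 from by decide, show (0+1:ZMod 2)=1 from by decide,
            show (1+0:ZMod 2)=1 from by decide, show (1:ZMod 2) ≠ 0 from by decide])

@[simp] lemma act_one_apply (k : RACG (doubleMinusStar G x)) :
    act G x (Multiplicative.ofAdd 1) k = sigmaHom G x k := by
  simp [act, MonoidHom.mk'_apply]
  rfl

end Sigma

section PhiPsi
variable {V : Type*} (G : SimpleGraph V) (x : V)

lemma racg_gen_commute {G : SimpleGraph V} {a b : V} (h : G.Adj a b) :
    Commute (racgGen G a) (racgGen G b) := racg_gen_comm h

open Classical in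
noncomputable def phiFun (v : V) :
    RACG (doubleMinusStar G x) ⋊[act G x] Multiplicative (ZMod 2) :=
  if h : v = x then SemidirectProduct.inr (Multiplicative.ofAdd 1)
  else SemidirectProduct.inl (racgGen _ (Sum.inl ⟨v, h⟩))

lemma phiFun_sq (v : V) : phiFun G x v * phiFun G x v = 1 := by
  by_cases h : v = x
  · rw [phiFun, dif_pos h, ← map_mul, ← ofAdd_add,
      show ((1 : ZMod 2) + 1) = 0 from by decide]
    simp
  · erw [phiFun, dif_neg h, ← map_mul, racg_gen_sq, map_one]

lemma phiFun_comm (a b : V) (hab : G.Adj a b) :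
    phiFun G x a * phiFun G x b = phiFun G x b * phiFun G x a := by
  by_cases ha : a = x <;> by_cases hb : b = x
  · exact absurd (hb ▸ ha ▸ hab) (G.irrefl)
  · -- a = x, b ≠ x
    have hadj : G.Adj x b := ha ▸ hab
    rw [ha, phiFun, phiFun, dif_pos rfl, dif_neg hb]
    have hfix : act G x (Multiplicative.ofAdd 1) (racgGen _ (Sum.inl ⟨b, hb⟩)) =
        racgGen _ (Sum.inl ⟨b, hb⟩) := by
      erw [act_one_apply, sigmaHom_gen, swapVert_inl_star G x hadj]; exact rfl
    ext <;> simp [hfix]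
    exact one_mul _
  · -- b = x, a ≠ x
    have hadj : G.Adj x a := hb ▸ hab.symm
    rw [hb, phiFun, phiFun, dif_pos rfl, dif_neg ha]
    have hfix : act G x (Multiplicative.ofAdd 1) (racgGen _ (Sum.inl ⟨a, ha⟩)) =
        racgGen _ (Sum.inl ⟨a, ha⟩) := by
      erw [act_one_apply, sigmaHom_gen, swapVert_inl_star G x hadj]; exact rfl
    ext <;> simp [hfix]
    exact (one_mul _).symm
  · rw [phiFun, phiFun, dif_neg ha, dif_neg hb, ← map_mul, ← map_mul,
      racg_gen_comm (adj_inl_inl hab)]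

noncomputable def bigPhi :
    RACG G →* RACG (doubleMinusStar G x) ⋊[act G x] Multiplicative (ZMod 2) :=
  racgHom G (phiFun G x) (phiFun_sq G x) (phiFun_comm G x)

@[simp] lemma bigPhi_gen (v : V) : bigPhi G x (racgGen G v) = phiFun G x v :=
  racgHom_gen _ _ _ _ _

noncomputable def psiKFun : DoubleVert G x → RACG G
  | Sum.inl a => racgGen G a.1
  | Sum.inr a => racgGen G x * racgGen G a.1 * racgGen G x

@[simp] lemma psiKFun_inl (a : {v : V // v ≠ x}) :
    psiKFun G x (Sum.inl a) = racgGen G a.1 := rfl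

@[simp] lemma psiKFun_inr (a : {v : V // ¬(v = x ∨ G.Adj x v)}) :
    psiKFun G x (Sum.inr a) = racgGen G x * racgGen G a.1 * racgGen G x := rfl

lemma psiKFun_sq (a : DoubleVert G x) : psiKFun G x a * psiKFun G x a = 1 := by
  rcases a with a | a
  · exact racg_gen_sq G a.1
  · rw [psiKFun_inr]
    set X := racgGen G x
    set A := racgGen G a.1
    have hx : X * X = 1 := racg_gen_sq G x
    have ha : A * A = 1 := racg_gen_sq G a.1
    calc X*A*X*(X*A*X) = X*(A*(X*X*(A*X))) := by group
      _ = X*(A*(A*X)) := by rw [hx, one_mul]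
      _ = X*(A*A*X) := by group
      _ = X*X := by rw [ha, one_mul]
      _ = 1 := hx

lemma psiKFun_comm (p q : DoubleVert G x) (h : (doubleMinusStar G x).Adj p q) :
    psiKFun G x p * psiKFun G x q = psiKFun G x q * psiKFun G x p := by
  rw [doubleMinusStar_adj_iff] at h
  obtain ⟨-, hrel⟩ := h
  match p, q with
  | Sum.inl a, Sum.inl b =>
    have hab : G.Adj a.1 b.1 := by rcases hrel with h | h; exacts [h, h.symm]
    exact racg_gen_commute hab
  | Sum.inl a, Sum.inr b =>
    have hab : G.Adj a.1 b.1 ∧ G.Adj x a.1 := by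
      rcases hrel with h | h; exacts [h, ⟨h.1.symm, h.2⟩]
    have hAX : Commute (racgGen G a.1) (racgGen G x) := (racg_gen_commute hab.2).symm
    have hAB : Commute (racgGen G a.1) (racgGen G b.1) := racg_gen_commute hab.1
    exact (hAX.mul_right hAB).mul_right hAX
  | Sum.inr a, Sum.inl b =>
    have hab : G.Adj a.1 b.1 ∧ G.Adj x b.1 := by
      rcases hrel with h | h; exacts [h, ⟨h.1.symm, h.2⟩]
    have hBX : Commute (racgGen G b.1) (racgGen G x) := (racg_gen_commute hab.2).symm
    have hBA : Commute (racgGen G b.1) (racgGen G a.1) := racg_gen_commute hab.1.symm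
    exact (((hBX.mul_right hBA).mul_right hBX)).symm
  | Sum.inr a, Sum.inr b =>
    have hab : G.Adj a.1 b.1 := by rcases hrel with h | h; exacts [h, h.symm]
    have hc := (racg_gen_commute hab).map (MulAut.conj (racgGen G x)).toMonoidHom
    simp only [MulEquiv.coe_toMonoidHom, MulAut.conj_apply, racg_gen_inv] at hc
    exact hc

noncomputable def psiK : RACG (doubleMinusStar G x) →* RACG G :=
  racgHom _ (psiKFun G x) (psiKFun_sq G x) (psiKFun_comm G x)

@[simp] lemma psiK_gen (a : DoubleVert G x) :
    psiK G x (racgGen _ a) = psiKFun G x a := racgHom_gen _ _ _ _ _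

noncomputable def psiC : Multiplicative (ZMod 2) →* RACG G :=
  MonoidHom.mk' (fun c => if Multiplicative.toAdd c = 0 then 1 else racgGen G x)
    (by
      have h2 : ∀ z : ZMod 2, z = 0 ∨ z = 1 := by decide
      intro a b
      rcases h2 (Multiplicative.toAdd a) with ha | ha <;>
        rcases h2 (Multiplicative.toAdd b) with hb | hb <;>
        · simp only [toAdd_mul, ha, hb]
          simp [racg_gen_sq G x, show (1+1:ZMod 2)=0 from by decide,
            show (0+0:ZMod 2)=0 from by decide, show (0+1:ZMod 2)=1 from by decide,
            show (1+0:ZMod 2)=1 from by decide, show (1:ZMod 2) ≠ 0 from by decide])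

@[simp] lemma psiC_ofAdd_one : psiC G x (Multiplicative.ofAdd 1) = racgGen G x := by
  simp [psiC, MonoidHom.mk'_apply]

lemma psi_compat (c : Multiplicative (ZMod 2)) :
    (psiK G x).comp (act G x c).toMonoidHom =
      (MulAut.conj (psiC G x c)).toMonoidHom.comp (psiK G x) := by
  have h2 : ∀ z : ZMod 2, z = 0 ∨ z = 1 := by decide
  rcases h2 (Multiplicative.toAdd c) with hc | hc
  · have hc' : c = 1 := Multiplicative.toAdd.injective (by simpa using hc)
    subst hc'
    ext k
    simp
  · have hc' : c = Multiplicative.ofAdd 1 :=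
      Multiplicative.toAdd.injective (by simpa using hc)
    subst hc'
    apply racg_hom_ext
    intro a
    simp only [MonoidHom.comp_apply, MulEquiv.coe_toMonoidHom, act_one_apply, sigmaHom_gen,
      MulAut.conj_apply, psiC_ofAdd_one, psiK_gen]
    rw [racg_gen_inv]
    have hX : racgGen G x * racgGen G x = 1 := racg_gen_sq G x
    rcases a with a | a
    · by_cases hs : G.Adj x a.1
      · rw [swapVert_inl_star G x hs, psiKFun_inl,
          racg_gen_comm (show G.Adj x a.1 from hs), mul_assoc, hX, mul_one]
      · rw [swapVert_inl_nonstar G x hs, psiKFun_inr, psiKFun_inl]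
    · rw [swapVert_inr, psiKFun_inl, psiKFun_inr]
      set X := racgGen G x
      set A := racgGen G a.1
      calc A = (X*X)*A*(X*X) := by rw [hX]; group
        _ = X*(X*A*X)*X := by group

noncomputable def bigPsi :
    (RACG (doubleMinusStar G x) ⋊[act G x] Multiplicative (ZMod 2)) →* RACG G :=
  SemidirectProduct.lift (psiK G x) (psiC G x) (psi_compat G x)

end PhiPsi

section Main
variable {V : Type*} (G : SimpleGraph V) (x : V)

lemma psi_phi (w : RACG G) : bigPsi G x (bigPhi G x w) = w := by
  have h : (bigPsi G x).comp (bigPhi G x) = MonoidHom.id (RACG G) := by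
    apply racg_hom_ext
    intro v
    simp only [MonoidHom.comp_apply, MonoidHom.id_apply, bigPhi_gen]
    by_cases h : v = x
    · rw [phiFun, dif_pos h, bigPsi, SemidirectProduct.lift_inr, psiC_ofAdd_one, h]
    · erw [phiFun, dif_neg h, bigPsi, SemidirectProduct.lift_inl, psiK_gen, psiKFun_inl]
  exact DFunLike.congr_fun h w

lemma t_inv : (Multiplicative.ofAdd (1 : ZMod 2))⁻¹ = Multiplicative.ofAdd (1 : ZMod 2) := by
  decide

lemma phi_psi (s : RACG (doubleMinusStar G x) ⋊[act G x] Multiplicative (ZMod 2)) :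
    bigPhi G x (bigPsi G x s) = s := by
  have h : (bigPhi G x).comp (bigPsi G x) = MonoidHom.id _ := by
    apply SemidirectProduct.hom_ext
    · apply racg_hom_ext
      intro a
      simp only [MonoidHom.comp_apply, MonoidHom.id_apply, bigPsi,
        SemidirectProduct.lift_inl, psiK_gen]
      rcases a with a | a
      · rw [psiKFun_inl, bigPhi_gen, phiFun, dif_neg a.2]
      · rw [psiKFun_inr]
        have hne : a.1 ≠ x := fun h => a.2 (Or.inl h)
        have hns : ¬ G.Adj x a.1 := fun h => a.2 (Or.inr h)
        rw [map_mul, map_mul, bigPhi_gen, bigPhi_gen, phiFun, dif_pos rfl, phiFun, dif_neg hne]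
        have key := SemidirectProduct.inl_aut (φ := act G x)
          (Multiplicative.ofAdd (1 : ZMod 2)) (racgGen _ (Sum.inl ⟨a.1, hne⟩))
        rw [t_inv] at key
        erw [← key, act_one_apply, sigmaHom_gen, swapVert_inl_nonstar G x hns]
    · apply MonoidHom.ext
      intro c
      have h2 : ∀ z : ZMod 2, z = 0 ∨ z = 1 := by decide
      simp only [MonoidHom.comp_apply, MonoidHom.id_apply, bigPsi,
        SemidirectProduct.lift_inr]
      rcases h2 (Multiplicative.toAdd c) with hc | hc
      · have hc' : c = 1 := Multiplicative.toAdd.injective (by simpa using hc)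
        subst hc'
        simp
      · have hc' : c = Multiplicative.ofAdd 1 :=
          Multiplicative.toAdd.injective (by simpa using hc)
        subst hc'
        rw [psiC_ofAdd_one, bigPhi_gen, phiFun, dif_pos rfl]
  exact DFunLike.congr_fun h s

noncomputable def bigEquiv :
    RACG G ≃* (RACG (doubleMinusStar G x) ⋊[act G x] Multiplicative (ZMod 2)) :=
  { toFun := bigPhi G x, invFun := bigPsi G x,
    left_inv := psi_phi G x, right_inv := phi_psi G x,
    map_mul' := map_mul _ }

end Main

/-- For any graph `Λ` with a vertex `x`, the right-angled Coxeter group of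
the graph `Λ'` obtained by doubling `Λ` along the star of `x` and deleting `x` embeds as an
index-2 subgroup of `W_Λ`, namely as the kernel of the homomorphism `W_Λ → ℤ/2` sending the
generator `x` to `1` and all other generators to `0`. -/
theorem racg_doubleMinusStar_index_two_kernel
    {V : Type} [Fintype V] [DecidableEq V] (G : SimpleGraph V) (x : V) :
    ∃ f : RACG G →* Multiplicative (ZMod 2),
      f (racgGen G x) = Multiplicative.ofAdd (1 : ZMod 2) ∧
      (∀ v : V, v ≠ x → f (racgGen G v) = 1) ∧
      Function.Surjective f ∧
      f.ker.index = 2 ∧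
      Nonempty (RACG (doubleMinusStar G x) ≃* f.ker) := by
  classical
  set f := SemidirectProduct.rightHom.comp (bigPhi G x) with hf
  have h2 : ∀ z : ZMod 2, z = 0 ∨ z = 1 := by decide
  have hx1 : f (racgGen G x) = Multiplicative.ofAdd 1 := by
    rw [hf, MonoidHom.comp_apply, bigPhi_gen, phiFun, dif_pos rfl,
      SemidirectProduct.rightHom_inr]
  have hv1 : ∀ v : V, v ≠ x → f (racgGen G v) = 1 := by
    intro v hv
    rw [hf, MonoidHom.comp_apply, bigPhi_gen, phiFun, dif_neg hv,
      SemidirectProduct.rightHom_inl]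
  have hsurj : Function.Surjective f := by
    intro c
    rcases h2 (Multiplicative.toAdd c) with hc | hc
    · have hc' : c = 1 := Multiplicative.toAdd.injective (by simpa using hc)
      exact ⟨1, by rw [map_one, hc']⟩
    · have hc' : c = Multiplicative.ofAdd 1 :=
        Multiplicative.toAdd.injective (by simpa using hc)
      exact ⟨racgGen G x, by rw [hx1, hc']⟩
  have hcard : Nat.card (Multiplicative (ZMod 2)) = 2 := by
    rw [Nat.card_eq_fintype_card]
    rfl
  have hidx : f.ker.index = 2 := by
    rw [Subgroup.index_ker, MonoidHom.range_eq_top.mpr hsurj]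
    exact (Nat.card_congr Subgroup.topEquiv.toEquiv).trans hcard
  have hker : (SemidirectProduct.rightHom.ker).map
      (bigEquiv G x).symm.toMonoidHom = f.ker := by
    ext w
    rw [Subgroup.mem_map_equiv]
    simp only [MulEquiv.symm_symm]
    rw [MonoidHom.mem_ker, MonoidHom.mem_ker]
    rfl
  exact ⟨f, hx1, hv1, hsurj, hidx,
    ⟨(MonoidHom.ofInjective SemidirectProduct.inl_injective).trans
      ((MulEquiv.subgroupCongr SemidirectProduct.range_inl_eq_ker_rightHom).trans
        ((MulEquiv.subgroupMap (bigEquiv G x).symm _).trans (MulEquiv.subgroupCongr hker)))⟩⟩
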